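/- arXiv:1707.07513 — 7 statements merged into one kernel-verified Lean document; each statement's English description precedes it below -/
import Mathlib

section
/- If η : ℕ → ℝ is a nondecreasing positive doubling weight with doubling constant c, then the summing weight η̃(N) = ∑_{j=1}^N η(j)/j is doubling with constant at most 3c/2, i.e., η̃(2N) ≤ (3c/2)·η̃(N) for all N ≥ 1. -/
/-- Proposition 2.5, second part: If `η` is a nondecreasing positive
doubling weight with doubling constant `c`, then the summing weight
`η̃ N = ∑_{j=1}^N η j / j` is doubling with constant at most `3c/2`. -/
theorem stmt_1 (η : ℕ → ℝ) (c : ℝ) (hc : 1 ≤ c)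
    (hpos : ∀ j, 1 ≤ j → 0 < η j)
    (hmono : ∀ j, 1 ≤ j → η j ≤ η (j + 1))
    (hdoub : ∀ j, 1 ≤ j → η (2 * j) ≤ c * η j) :
    ∀ N, 1 ≤ N →
      ∑ j ∈ Finset.Icc 1 (2 * N), η j / j ≤ (3 * c / 2) * ∑ j ∈ Finset.Icc 1 N, η j / j := by
  -- key termwise bound
  have key : ∀ n : ℕ, η (2*n+1) / (2*(n:ℝ)+1) + η (2*n+2) / (2*(n:ℝ)+2)
      ≤ (3 * c / 2) * (η (n+1) / ((n:ℝ)+1)) := by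
    intro n
    have hp : 0 < η (n+1) := hpos (n+1) (by omega)
    have hcE : 0 ≤ c * η (n+1) := by positivity
    have hd : η (2*(n+1)) ≤ c * η (n+1) := hdoub (n+1) (by omega)
    have h2 : η (2*n+2) ≤ c * η (n+1) := by
      have : 2*(n+1) = 2*n+2 := by ring
      rwa [this] at hd
    have h1 : η (2*n+1) ≤ c * η (n+1) := le_trans (hmono (2*n+1) (by omega)) h2
    have hn1 : (0:ℝ) < (n:ℝ)+1 := by positivity
    have hA : η (2*n+1) / (2*(n:ℝ)+1) ≤ c * η (n+1) / ((n:ℝ)+1) := by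
      apply div_le_div₀ hcE h1 hn1
      linarith [Nat.cast_nonneg (α := ℝ) n]
    have hB : η (2*n+2) / (2*(n:ℝ)+2) ≤ c * η (n+1) / (2*((n:ℝ)+1)) := by
      have : (2*(n:ℝ)+2) = 2*((n:ℝ)+1) := by ring
      rw [this]
      exact div_le_div_of_nonneg_right h2 (by positivity) |>.trans_eq rfl
    have heq : c * η (n+1) / ((n:ℝ)+1) + c * η (n+1) / (2*((n:ℝ)+1))
        = (3 * c / 2) * (η (n+1) / ((n:ℝ)+1)) := by
      field_simp; ring
    linarith
  intro N hN
  induction N, hN using Nat.le_induction with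
  | base =>
    have h2 : Finset.Icc 1 2 = ({1, 2} : Finset ℕ) := by decide
    have h1 : Finset.Icc 1 1 = ({1} : Finset ℕ) := by decide
    rw [show 2*1 = 2 from rfl, h2, h1]
    have hd := hdoub 1 le_rfl
    have hp := hpos 1 le_rfl
    norm_num
    nlinarith
  | succ n hn ih =>
    have e1 : 2 * (n+1) = (2*n+1) + 1 := by ring
    rw [e1, Finset.sum_Icc_succ_top (by omega), Finset.sum_Icc_succ_top (by omega),
      Finset.sum_Icc_succ_top (show 1 ≤ n+1 by omega)]
    have k := key n
    push_cast
    push_cast at k ih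
    have hsn : (0:ℝ) ≤ ∑ j ∈ Finset.Icc 1 n, η j / j := by
      apply Finset.sum_nonneg
      intro j hj
      have := hpos j (Finset.mem_Icc.mp hj).1
      positivity
    rw [show 2*n+1+1 = 2*n+2 from rfl, show (2:ℝ)*n+1+1 = 2*(n:ℝ)+2 from by ring, mul_add]
    linarith
end

section
/- Let η : ℕ → ℝ be a positive nondecreasing weight. Then sup_N η̃(N)/η(N) < ∞ if and only if the lower dilation index i_η is strictly positive, where η̃(N) = ∑_{j=1}^N η(j)/j. -/
private lemma eta_mono' (η : ℕ → ℝ) (hmono : ∀ j, 1 ≤ j → η j ≤ η (j + 1)) :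
    ∀ a b : ℕ, 1 ≤ a → a ≤ b → η a ≤ η b := by
  intro a b ha hab
  induction b, hab using Nat.le_induction with
  | base => exact le_rfl
  | succ n hn ih => exact ih.trans (hmono n (ha.trans hn))

/-- Proposition 2.6: For a positive nondecreasing weight `η`,
`sup_N η̃(N)/η(N) < ∞` iff the lower dilation index `i_η` is strictly positive.
Here `sup_N η̃(N)/η(N) < ∞` is rendered as `∃ C, ∀ N ≥ 1, η̃ N ≤ C * η N`, and
`i_η > 0` (with `i_η = sup_{M>1} ln(φ_η M)/ln M`, `φ_η M = inf_{k≥1} η(Mk)/η(k)`)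
is rendered by its equivalent form: there is an integer `M ≥ 2` with `φ_η M > 1`,
i.e. some `λ > 1` with `λ·η k ≤ η (M·k)` for all `k ≥ 1`. -/
theorem stmt_2 (η : ℕ → ℝ)
    (hpos : ∀ j, 1 ≤ j → 0 < η j)
    (hmono : ∀ j, 1 ≤ j → η j ≤ η (j + 1)) :
    (∃ C : ℝ, ∀ N, 1 ≤ N → ∑ j ∈ Finset.Icc 1 N, η j / j ≤ C * η N)
      ↔ (∃ M : ℕ, 2 ≤ M ∧ ∃ lam : ℝ, 1 < lam ∧ ∀ k, 1 ≤ k → lam * η k ≤ η (M * k)) := by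
  have hmono' := eta_mono' η hmono
  set S : ℕ → ℝ := fun N => ∑ j ∈ Finset.Icc 1 N, η j / j with hS
  have hIoc : ∀ n : ℕ, Finset.Icc 1 n = Finset.Ioc 0 n := fun n => Finset.Icc_add_one_left_eq_Ioc 0 n
  have hsplitgen : ∀ a b : ℕ, a ≤ b → S a + ∑ j ∈ Finset.Ioc a b, η j / j = S b := by
    intro a b hab
    simp only [hS, hIoc]
    exact Finset.sum_Ioc_consecutive _ (Nat.zero_le a) hab
  constructor
  · rintro ⟨C, hC⟩
    -- C ≥ 1
    have hC1 : 1 ≤ C := by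
      have h1 := hC 1 le_rfl
      simp only [hS, Finset.Icc_self, Finset.sum_singleton, Nat.cast_one, div_one] at h1
      have := hpos 1 le_rfl
      nlinarith
    have hCpos : 0 < C := by linarith
    -- doubling step
    have hstep : ∀ m : ℕ, 1 ≤ m → S m + η m / 2 ≤ S (2 * m) := by
      intro m hm
      have hsplit : S m + ∑ j ∈ Finset.Ioc m (2 * m), η j / j = S (2 * m) :=
        hsplitgen m (2 * m) (by omega)
      have hlow : η m / 2 ≤ ∑ j ∈ Finset.Ioc m (2 * m), η j / j := by
        have hb : ∀ j ∈ Finset.Ioc m (2 * m), η m / (2 * m) ≤ η j / j := by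
          intro j hj
          rw [Finset.mem_Ioc] at hj
          have hj1 : 1 ≤ j := by omega
          refine div_le_div₀ (hpos j hj1).le (hmono' m j hm (by omega)) (by positivity) ?_
          exact_mod_cast hj.2
        have := Finset.card_nsmul_le_sum (Finset.Ioc m (2 * m)) (fun j => η j / j)
          (η m / (2 * m)) hb
        rw [Nat.card_Ioc] at this
        have hmR : (0:ℝ) < (m:ℝ) := by exact_mod_cast hm
        have hcard : ((2 * m - m : ℕ) : ℝ) = (m:ℝ) := by
          have : 2 * m - m = m := by omega
          rw [this]
        rw [nsmul_eq_mul, hcard] at this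
        calc η m / 2 = (m:ℝ) * (η m / (2 * m)) := by field_simp
          _ ≤ _ := this
      linarith
    -- iterate
    have hiter : ∀ n : ℕ, ∀ k : ℕ, 1 ≤ k → (n : ℝ) / 2 * η k ≤ S (2 ^ n * k) := by
      intro n
      induction n with
      | zero =>
        intro k hk
        simp only [Nat.cast_zero, zero_div, zero_mul, pow_zero, one_mul]
        refine Finset.sum_nonneg fun j hj => ?_
        rw [Finset.mem_Icc] at hj
        exact div_nonneg (hpos j hj.1).le (Nat.cast_nonneg j)
      | succ n ih =>
        intro k hk
        have hk2 : 1 ≤ 2 ^ n * k := Nat.mul_pos (pow_pos two_pos n) hk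
        have h1 := hstep (2 ^ n * k) hk2
        have h2 := ih k hk
        have h3 : η k ≤ η (2 ^ n * k) := hmono' k _ hk (Nat.le_mul_of_pos_left k (by positivity))
        have harr : 2 * (2 ^ n * k) = 2 ^ (n + 1) * k := by ring
        rw [harr] at h1
        push_cast
        linarith
    -- choose n
    set n : ℕ := ⌈4 * C⌉₊ + 1 with hn
    have hnC : 4 * C ≤ (n : ℝ) := by
      have := Nat.le_ceil (4 * C)
      rw [hn]; push_cast
      linarith
    refine ⟨2 ^ n, ?_, 2, one_lt_two, ?_⟩
    · have : 2 ^ 1 ≤ 2 ^ n := Nat.pow_le_pow_right (by norm_num) (by omega)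
      simpa using this
    · intro k hk
      have hk2 : 1 ≤ 2 ^ n * k := Nat.mul_pos (pow_pos two_pos n) hk
      have h1 := hiter n k hk
      have h2 := hC (2 ^ n * k) hk2
      have hηk := hpos k hk
      have : 2 * C * η k ≤ C * η (2 ^ n * k) := by nlinarith
      have := (mul_le_mul_iff_right₀ hCpos).mp (by linarith : C * (2 * η k) ≤ C * η (2 ^ n * k))
      linarith
  · rintro ⟨M, hM, lam, hlam, hphi⟩
    have hlam0 : (0:ℝ) < lam := by linarith
    have hlam1 : (0:ℝ) < lam - 1 := by linarith
    have hMR : (0:ℝ) < (M:ℝ) := by exact_mod_cast (by omega : 0 < M)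
    set C : ℝ := M * lam / (lam - 1) with hCdef
    have hCM : (M:ℝ) ≤ C := by
      rw [hCdef, le_div_iff₀ hlam1]
      nlinarith
    have hCeq : C / lam + M = C := by
      rw [hCdef]
      field_simp
      ring
    refine ⟨C, ?_⟩
    intro N
    induction N using Nat.strong_induction_on with
    | _ N ih =>
      intro hN
      by_cases hcase : N < M
      · -- small case
        have hb : ∀ j ∈ Finset.Icc 1 N, η j / j ≤ η N := by
          intro j hj
          rw [Finset.mem_Icc] at hj
          calc η j / j ≤ η j := div_le_self (hpos j hj.1).le (by exact_mod_cast hj.1)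
            _ ≤ η N := hmono' j N hj.1 hj.2
        have hsum := Finset.sum_le_card_nsmul (Finset.Icc 1 N) (fun j => η j / j) (η N) hb
        rw [Nat.card_Icc, nsmul_eq_mul] at hsum
        have hNcard : ((N + 1 - 1 : ℕ) : ℝ) = (N : ℝ) := by norm_num
        rw [hNcard] at hsum
        have hNM : (N : ℝ) ≤ (M : ℝ) := by exact_mod_cast (by omega : N ≤ M)
        have hηN := (hpos N hN).le
        calc S N ≤ (N:ℝ) * η N := hsum
          _ ≤ C * η N := by nlinarith
      · -- main case, N ≥ M
        push_neg at hcase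
        set k : ℕ := N / M with hk
        have hdm : M * k + N % M = N := by rw [hk]; exact Nat.div_add_mod N M
        have hmod := Nat.mod_lt N (show 0 < M by omega)
        have hexp : M * (k + 1) = M * k + M := by ring
        have hk1 : 1 ≤ k := by
          rw [hk]
          exact Nat.one_le_div_iff (by omega) |>.mpr hcase
        have hkN : k < N := Nat.div_lt_self (by omega) (by omega)
        have hMk : M * k ≤ N := by omega
        have hNlt : N < M * (k + 1) := by omega
        -- split sum
        have hsplit : S k + ∑ j ∈ Finset.Ioc k N, η j / j = S N :=
          hsplitgen k N (le_of_lt hkN)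
        -- tail bound
        have htail : ∑ j ∈ Finset.Ioc k N, η j / j ≤ (M:ℝ) * η N := by
          have hb : ∀ j ∈ Finset.Ioc k N, η j / j ≤ η N / (k + 1) := by
            intro j hj
            rw [Finset.mem_Ioc] at hj
            have hj1 : 1 ≤ j := by omega
            refine div_le_div₀ (hpos N hN).le (hmono' j N hj1 hj.2) (by positivity) ?_
            exact_mod_cast hj.1
          have hsum := Finset.sum_le_card_nsmul (Finset.Ioc k N) (fun j => η j / j)
            (η N / (k + 1)) hb
          rw [Nat.card_Ioc, nsmul_eq_mul] at hsum
          refine hsum.trans ?_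
          rw [div_eq_mul_inv, ← mul_assoc]
          have hηN := (hpos N hN).le
          have hinv : (0:ℝ) < ((k:ℝ) + 1) := by positivity
          have hle : ((N - k : ℕ) : ℝ) ≤ (M:ℝ) * ((k:ℝ) + 1) := by
            have h1 : ((N - k : ℕ) : ℕ) ≤ M * (k + 1) := by omega
            calc ((N - k : ℕ) : ℝ) ≤ ((M * (k + 1) : ℕ) : ℝ) := by exact_mod_cast h1
              _ = (M:ℝ) * ((k:ℝ) + 1) := by push_cast; ring
          calc ((N - k : ℕ) : ℝ) * η N * ((k:ℝ) + 1)⁻¹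
              ≤ ((M:ℝ) * ((k:ℝ) + 1)) * η N * ((k:ℝ) + 1)⁻¹ := by gcongr
            _ = (M:ℝ) * η N := by field_simp
        -- head bound via IH and dilation
        have hIH : S k ≤ C * η k := ih k hkN hk1
        have hdil : η k ≤ η N / lam := by
          rw [le_div_iff₀ hlam0]
          calc η k * lam = lam * η k := by ring
            _ ≤ η (M * k) := hphi k hk1
            _ ≤ η N := hmono' (M * k) N (by omega) hMk
        have hηk := (hpos k hk1).le
        have hCpos : (0:ℝ) < C := lt_of_lt_of_le hMR hCM
        have hhead : C * η k ≤ (C / lam) * η N := by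
          calc C * η k ≤ C * (η N / lam) := by nlinarith
            _ = (C / lam) * η N := by ring
        have : S N ≤ (C / lam) * η N + (M:ℝ) * η N := by linarith
        calc S N ≤ (C / lam + M) * η N := by linarith
          _ = C * η N := by rw [hCeq]
end

section
/- Let η : ℕ → ℝ be a positive nondecreasing weight. Then ∑_{j=1}^∞ s_j*·η(j)/j ≤ C·∑_{j=1}^∞ s_j*·Δη(j) for all nonincreasing nonnegative sequences (s_j*) and some constant C if and only if the lower dilation index i_η > 0, where Δη(j) = η(j) − η(j−1) with η(0) = 0. -/
open Finset

/-- Abel summation identity. -/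
lemma abel_id (s a : ℕ → ℝ) (n : ℕ) :
    ∑ j ∈ range n, s (j+1) * a (j+1)
      = ∑ j ∈ range n, (s (j+1) - s (j+2)) * (∑ i ∈ range (j+1), a (i+1))
        + s (n+1) * ∑ i ∈ range n, a (i+1) := by
  induction n with
  | zero => simp
  | succ n ih =>
    rw [sum_range_succ, sum_range_succ, ih, sum_range_succ (fun i => a (i+1))]
    ring

/-- Dyadic harmonic lower bound. -/
lemma harmonic_lb (k : ℕ) (hk : 1 ≤ k) (r : ℕ) :
    (r : ℝ) / 2 ≤ ∑ j ∈ Ico k (2 ^ r * k), (1 : ℝ) / (j + 1) := by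
  induction r with
  | zero => simp
  | succ r ih =>
    have h1 : k ≤ 2 ^ r * k := Nat.le_mul_of_pos_left k (Nat.pow_pos (by norm_num))
    have h2 : 2 ^ r * k ≤ 2 ^ (r+1) * k := by
      apply Nat.mul_le_mul_right
      exact Nat.pow_le_pow_right (by norm_num) (Nat.le_succ r)
    rw [← Finset.sum_Ico_consecutive _ h1 h2]
    have hblock : (1 : ℝ) / 2 ≤ ∑ j ∈ Ico (2 ^ r * k) (2 ^ (r+1) * k), (1 : ℝ) / (j + 1) := by
      have hcard : (Ico (2 ^ r * k) (2 ^ (r+1) * k)).card = 2 ^ r * k := by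
        rw [Nat.card_Ico]
        have h2r : 2 ^ (r+1) * k = 2 ^ r * k + 2 ^ r * k := by rw [pow_succ]; ring
        omega
      have hterm : ∀ j ∈ Ico (2 ^ r * k) (2 ^ (r+1) * k),
          (1 : ℝ) / (2 ^ (r+1) * k) ≤ (1 : ℝ) / (j + 1) := by
        intro j hj
        rw [mem_Ico] at hj
        apply one_div_le_one_div_of_le
        · positivity
        · have : j + 1 ≤ 2 ^ (r+1) * k := hj.2
          exact_mod_cast this
      calc (1 : ℝ) / 2 = (2 ^ r * k : ℕ) * ((1:ℝ) / (2 ^ (r+1) * k)) := by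
            push_cast
            rw [pow_succ]
            field_simp
        _ = ∑ _j ∈ Ico (2 ^ r * k) (2 ^ (r+1) * k), (1 : ℝ) / (2 ^ (r+1) * k) := by
            rw [Finset.sum_const, hcard, nsmul_eq_mul]
        _ ≤ _ := Finset.sum_le_sum hterm
    push_cast
    calc ((r : ℝ) + 1) / 2 = (r : ℝ)/2 + 1/2 := by ring
      _ ≤ _ := add_le_add ih hblock

/-- Corollary 2.8(ii): for a positive nondecreasing weight `η`
(with `η 0 = 0`), the embedding `ℓ¹_{η̂} ↪ ℓ¹_η`, i.e.
`∑_j s_j*·η j / j ≤ C·∑_j s_j*·Δη j` for all nonincreasing nonnegative sequences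
`(s_j*)` and some constant `C`, holds iff the lower dilation index `i_η > 0`
(rendered equivalently: some integer `M ≥ 2` has `φ_η M = inf_{k≥1} η(Mk)/η k > 1`). -/
theorem stmt_4 (η : ℕ → ℝ) (hη0 : η 0 = 0)
    (hpos : ∀ j, 1 ≤ j → 0 < η j)
    (hmono : ∀ j, 1 ≤ j → η j ≤ η (j + 1)) :
    (∃ C : ℝ, ∀ s : ℕ → ℝ, (∀ j, 0 ≤ s j) → (∀ j, 1 ≤ j → s (j + 1) ≤ s j) →
        Summable (fun j : ℕ => s (j + 1) * (η (j + 1) - η j)) →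
        ∑' j : ℕ, s (j + 1) * η (j + 1) / (j + 1)
          ≤ C * ∑' j : ℕ, s (j + 1) * (η (j + 1) - η j))
      ↔ (∃ M : ℕ, 2 ≤ M ∧ ∃ lam : ℝ, 1 < lam ∧ ∀ k, 1 ≤ k → lam * η k ≤ η (M * k)) := by
  -- monotonicity on [1, ∞)
  have ηmono : ∀ i j : ℕ, 1 ≤ i → i ≤ j → η i ≤ η j := by
    intro i j hi hij
    induction j, hij using Nat.le_induction with
    | base => exact le_refl _
    | succ n hn ih => exact le_trans ih (hmono n (le_trans hi hn))
  constructor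
  · -- forward: embedding ⇒ index positive
    rintro ⟨C, hC⟩
    -- test with indicator of [1, N]
    have key : ∀ N : ℕ, 1 ≤ N →
        ∑ j ∈ range N, η (j+1) / ((j : ℝ) + 1) ≤ C * η N := by
      intro N hN1
      set s : ℕ → ℝ := fun j => if j ≤ N then 1 else 0 with hs
      have hs0 : ∀ j, 0 ≤ s j := by intro j; simp only [hs]; split <;> norm_num
      have hsmono : ∀ j, 1 ≤ j → s (j + 1) ≤ s j := by
        intro j hj; simp only [hs]
        split
        · split
          · exact le_refl _
          · omega
        · split <;> norm_num
      have hzero : ∀ j ∉ range N, s (j + 1) * (η (j + 1) - η j) = 0 := by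
        intro j hj
        rw [mem_range, not_lt] at hj
        have : ¬ (j + 1 ≤ N) := by omega
        simp [hs, this]
      have hzero2 : ∀ j ∉ range N, s (j + 1) * η (j + 1) / ((j : ℝ) + 1) = 0 := by
        intro j hj
        rw [mem_range, not_lt] at hj
        have : ¬ (j + 1 ≤ N) := by omega
        simp [hs, this]
      have hsum : Summable (fun j : ℕ => s (j + 1) * (η (j + 1) - η j)) :=
        summable_of_ne_finset_zero hzero
      have h := hC s hs0 hsmono hsum
      rw [tsum_eq_sum hzero, tsum_eq_sum hzero2] at h
      have hrhs : ∑ j ∈ range N, s (j + 1) * (η (j + 1) - η j) = η N := by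
        have heq : ∀ j ∈ range N, s (j + 1) * (η (j + 1) - η j) = η (j+1) - η j := by
          intro j hj
          rw [mem_range] at hj
          have : j + 1 ≤ N := by omega
          simp [hs, this]
        rw [Finset.sum_congr rfl heq, Finset.sum_range_sub, hη0, sub_zero]
      have hlhs : ∑ j ∈ range N, s (j + 1) * η (j + 1) / ((j : ℝ) + 1)
          = ∑ j ∈ range N, η (j+1) / ((j : ℝ) + 1) := by
        apply Finset.sum_congr rfl
        intro j hj
        rw [mem_range] at hj
        have : j + 1 ≤ N := by omega
        simp [hs, this]
      rw [hrhs, hlhs] at h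
      exact h
    -- C ≥ 1
    have hC1 : 1 ≤ C := by
      have h := key 1 le_rfl
      simp only [Finset.range_one, Finset.sum_singleton, Nat.cast_zero, zero_add, div_one] at h
      exact le_of_mul_le_mul_right (by linarith [h]) (hpos 1 le_rfl)
    have hCpos : 0 < C := lt_of_lt_of_le one_pos hC1
    -- dilation estimate
    have key2 : ∀ k r : ℕ, 1 ≤ k → η k * ((r : ℝ) / 2) ≤ C * η (2 ^ r * k) := by
      intro k r hk
      set N := 2 ^ r * k with hN
      have hkN : k ≤ N := Nat.le_mul_of_pos_left k (Nat.pow_pos (by norm_num))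
      have hN1 : 1 ≤ N := le_trans hk hkN
      have hsub : Ico k N ⊆ range N := by
        intro j hj; rw [mem_Ico] at hj; rw [mem_range]; exact hj.2
      calc η k * ((r : ℝ) / 2)
          ≤ η k * ∑ j ∈ Ico k N, (1 : ℝ) / (j + 1) :=
            mul_le_mul_of_nonneg_left (harmonic_lb k hk r) (le_of_lt (hpos k hk))
        _ = ∑ j ∈ Ico k N, η k * ((1 : ℝ) / (j + 1)) := Finset.mul_sum _ _ _
        _ ≤ ∑ j ∈ Ico k N, η (j+1) / ((j : ℝ) + 1) := by
            apply Finset.sum_le_sum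
            intro j hj
            rw [mem_Ico] at hj
            rw [mul_one_div]
            gcongr
            exact ηmono k (j+1) hk (by omega)
        _ ≤ ∑ j ∈ range N, η (j+1) / ((j : ℝ) + 1) := by
            apply Finset.sum_le_sum_of_subset_of_nonneg hsub
            intro j _ _
            apply div_nonneg (le_of_lt (hpos (j+1) (by omega)))
            positivity
        _ ≤ C * η N := key N hN1
    -- choose M = 2^r with r ≥ 4C
    set r : ℕ := max 1 ⌈4 * C⌉₊ with hr
    have hr1 : 1 ≤ r := le_max_left _ _
    have hr4C : 4 * C ≤ (r : ℝ) := by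
      calc 4 * C ≤ (⌈4 * C⌉₊ : ℝ) := Nat.le_ceil _
        _ ≤ (r : ℝ) := by exact_mod_cast le_max_right 1 ⌈4 * C⌉₊
    refine ⟨2 ^ r, ?_, (r : ℝ) / (2 * C), ?_, ?_⟩
    · calc 2 = 2 ^ 1 := (pow_one 2).symm
        _ ≤ 2 ^ r := Nat.pow_le_pow_right (by norm_num) hr1
    · rw [lt_div_iff₀ (by positivity)]
      linarith
    · intro k hk
      have h := key2 k r hk
      have heq : (r : ℝ) / (2 * C) * η k = (η k * ((r : ℝ) / 2)) / C := by
        field_simp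
      rw [heq, div_le_iff₀ hCpos]
      linarith [h]
  · -- backward: index positive ⇒ embedding
    rintro ⟨M, hM, lam, hlam, hdil⟩
    have hlam1 : 0 < lam - 1 := by linarith
    have hlam0 : 0 < lam := by linarith
    have hMR : (2:ℝ) ≤ (M : ℝ) := by exact_mod_cast hM
    have hMRpos : (0:ℝ) < (M : ℝ) := by linarith
    set a : ℕ → ℝ := fun j => η j / (j : ℝ) with ha
    set K : ℝ := (M : ℝ) * lam / (lam - 1) with hK
    have hKM : (M : ℝ) ≤ K := by
      have : K = (M : ℝ) + (M : ℝ) / (lam - 1) := by rw [hK]; field_simp; ring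
      rw [this]
      have : 0 ≤ (M : ℝ) / (lam - 1) := by positivity
      linarith
    have hKpos : 0 < K := lt_of_lt_of_le (by linarith) hKM
    have hKeq : K / lam + (M : ℝ) = K := by rw [hK]; field_simp; ring
    -- key estimate: partial sums of η(j)/j bounded by K η(n)
    have lemA : ∀ n : ℕ, ∑ i ∈ range n, a (i+1) ≤ K * η n := by
      intro n
      induction n using Nat.strong_induction_on with
      | _ n ih =>
        rcases Nat.eq_zero_or_pos n with h0 | hn
        · subst h0; simp [hη0]
        have hηn : 0 < η n := hpos n hn
        set q := n / M with hq
        have haup : ∀ j : ℕ, j + 1 ≤ n → a (j+1) ≤ η n := by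
          intro j hj
          have h1 : η (j+1) ≤ η n := ηmono (j+1) n (by omega) hj
          have h2 : a (j+1) ≤ η (j+1) := by
            simp only [ha]
            apply div_le_self (le_of_lt (hpos (j+1) (by omega)))
            exact_mod_cast Nat.one_le_iff_ne_zero.mpr (Nat.succ_ne_zero j)
          linarith
        rcases Nat.eq_zero_or_pos q with hq0 | hq1
        · -- n < M
          have hnM : n < M := by
            rcases Nat.lt_or_ge n M with h | h
            · exact h
            · exfalso
              have : 1 ≤ q := by
                rw [hq]
                exact Nat.one_le_div_iff (by omega) |>.mpr h
              omega
          calc ∑ i ∈ range n, a (i+1) ≤ ∑ _i ∈ range n, η n := by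
                apply Finset.sum_le_sum
                intro i hi
                rw [mem_range] at hi
                exact haup i (by omega)
            _ = (n : ℝ) * η n := by rw [Finset.sum_const, card_range, nsmul_eq_mul]
            _ ≤ K * η n := by
                apply mul_le_mul_of_nonneg_right _ (le_of_lt hηn)
                have : (n : ℝ) ≤ (M : ℝ) := by exact_mod_cast le_of_lt hnM
                linarith
        · -- q ≥ 1
          have hqn : q < n := Nat.div_lt_self hn (by omega)
          have hMq : M * q ≤ n := by rw [hq, Nat.mul_comm]; exact Nat.div_mul_le_self n M
          have hnlt : n < M * (q + 1) := by
            have h1 : M * q + n % M = n := by rw [hq]; exact Nat.div_add_mod n M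
            have h2 : n % M < M := Nat.mod_lt n (by omega)
            calc n = M * q + n % M := h1.symm
              _ < M * q + M := Nat.add_lt_add_left h2 _
              _ = M * (q + 1) := (Nat.mul_succ M q).symm
          have split : ∑ i ∈ range n, a (i+1)
              = ∑ i ∈ range q, a (i+1) + ∑ i ∈ Ico q n, a (i+1) := by
            simp only [range_eq_Ico]
            exact (Finset.sum_Ico_consecutive (fun i => a (i+1)) (Nat.zero_le q)
              (le_of_lt hqn)).symm
          have b1 : ∑ i ∈ range q, a (i+1) ≤ (K / lam) * η n := by
            have h1 := ih q hqn
            have h2 : lam * η q ≤ η (M * q) := hdil q hq1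
            have h3 : η (M * q) ≤ η n := ηmono (M * q) n (Nat.mul_pos (by omega) hq1) hMq
            calc ∑ i ∈ range q, a (i+1) ≤ K * η q := h1
              _ = (K / lam) * (lam * η q) := by field_simp
              _ ≤ (K / lam) * η n := by
                  apply mul_le_mul_of_nonneg_left _ (le_of_lt (div_pos hKpos hlam0))
                  linarith
          have b2 : ∑ i ∈ Ico q n, a (i+1) ≤ (M : ℝ) * η n := by
            have hterm : ∀ i ∈ Ico q n, a (i+1) ≤ η n / ((q : ℝ) + 1) := by
              intro i hi
              rw [mem_Ico] at hi
              have h1 : η (i+1) ≤ η n := ηmono (i+1) n (by omega) (by omega)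
              simp only [ha]
              apply div_le_div₀ (le_of_lt hηn) h1 (by positivity)
              have h2 : q + 1 ≤ i + 1 := by omega
              exact_mod_cast h2
            calc ∑ i ∈ Ico q n, a (i+1) ≤ ∑ _i ∈ Ico q n, η n / ((q : ℝ) + 1) :=
                  Finset.sum_le_sum hterm
              _ = ((n - q : ℕ) : ℝ) * (η n / ((q : ℝ) + 1)) := by
                  rw [Finset.sum_const, Nat.card_Ico, nsmul_eq_mul]
              _ ≤ (M : ℝ) * η n := by
                  have h1 : ((n - q : ℕ) : ℝ) ≤ (M : ℝ) * ((q : ℝ) + 1) := by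
                    have : ((n - q : ℕ) : ℝ) ≤ (n : ℝ) := by
                      exact_mod_cast Nat.sub_le n q
                    have h2 : (n : ℝ) ≤ (M : ℝ) * ((q : ℝ) + 1) := by
                      exact_mod_cast le_of_lt hnlt
                    linarith
                  calc ((n - q : ℕ) : ℝ) * (η n / ((q : ℝ) + 1))
                      ≤ ((M : ℝ) * ((q : ℝ) + 1)) * (η n / ((q : ℝ) + 1)) := by
                        apply mul_le_mul_of_nonneg_right h1 (by positivity)
                    _ = (M : ℝ) * η n := by field_simp
          calc ∑ i ∈ range n, a (i+1)
              = ∑ i ∈ range q, a (i+1) + ∑ i ∈ Ico q n, a (i+1) := split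
            _ ≤ (K / lam) * η n + (M : ℝ) * η n := add_le_add b1 b2
            _ = (K / lam + (M : ℝ)) * η n := by ring
            _ = K * η n := by rw [hKeq]
    -- main embedding
    refine ⟨K, ?_⟩
    intro s hs0 hsmono hsum
    have hΔ : ∀ j : ℕ, 0 ≤ η (j+1) - η j := by
      intro j
      cases j with
      | zero => rw [hη0, sub_zero]; exact le_of_lt (hpos 1 le_rfl)
      | succ m => exact sub_nonneg.mpr (hmono (m+1) (by omega))
    have hRterms : ∀ j : ℕ, 0 ≤ s (j+1) * (η (j+1) - η j) :=
      fun j => mul_nonneg (hs0 _) (hΔ j)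
    have hpart : ∀ n, ∑ j ∈ range n, s (j+1) * (η (j+1) - η j)
        ≤ ∑' j : ℕ, s (j + 1) * (η (j + 1) - η j) :=
      fun n => Summable.sum_le_tsum _ (fun i _ => hRterms i) hsum
    apply Real.tsum_le_of_sum_range_le
    · intro n
      apply div_nonneg (mul_nonneg (hs0 _) (le_of_lt (hpos (n+1) (by omega))))
      positivity
    · intro n
      set b : ℕ → ℝ := fun j => η j - η (j - 1) with hb
      have hB : ∀ m : ℕ, ∑ i ∈ range m, b (i+1) = η m := by
        intro m
        have heq : ∀ i : ℕ, b (i+1) = η (i+1) - η i := by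
          intro i; simp only [hb, Nat.add_sub_cancel]
        rw [Finset.sum_congr rfl (fun i _ => heq i), Finset.sum_range_sub, hη0, sub_zero]
      have habel2 : ∑ j ∈ range n, s (j+1) * (η (j+1) - η j)
          = ∑ j ∈ range n, (s (j+1) - s (j+2)) * η (j+1) + s (n+1) * η n := by
        have h := abel_id s b n
        simp only [hB] at h
        have heq : ∀ j ∈ range n, s (j+1) * (η (j+1) - η j) = s (j+1) * b (j+1) := by
          intro j _; simp only [hb, Nat.add_sub_cancel]
        rw [Finset.sum_congr rfl heq, h]
      calc ∑ j ∈ range n, s (j + 1) * η (j + 1) / ((j : ℝ) + 1)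
          = ∑ j ∈ range n, s (j+1) * a (j+1) := by
            apply Finset.sum_congr rfl
            intro j _
            simp only [ha]
            push_cast
            ring
        _ = ∑ j ∈ range n, (s (j+1) - s (j+2)) * (∑ i ∈ range (j+1), a (i+1))
              + s (n+1) * ∑ i ∈ range n, a (i+1) := abel_id s a n
        _ ≤ ∑ j ∈ range n, (s (j+1) - s (j+2)) * (K * η (j+1)) + s (n+1) * (K * η n) := by
            apply add_le_add
            · apply Finset.sum_le_sum
              intro j _
              apply mul_le_mul_of_nonneg_left (lemA (j+1))
              exact sub_nonneg.mpr (hsmono (j+1) (by omega))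
            · exact mul_le_mul_of_nonneg_left (lemA n) (hs0 _)
        _ = K * (∑ j ∈ range n, (s (j+1) - s (j+2)) * η (j+1) + s (n+1) * η n) := by
            rw [mul_add, Finset.mul_sum]
            congr 1
            · apply Finset.sum_congr rfl; intro j _; ring
            · ring
        _ = K * ∑ j ∈ range n, s (j+1) * (η (j+1) - η j) := by rw [habel2]
        _ ≤ K * ∑' j : ℕ, s (j + 1) * (η (j + 1) - η j) :=
            mul_le_mul_of_nonneg_left (hpart n) (le_of_lt hKpos)
end

section
/- Let η : ℕ → ℝ be a positive nondecreasing weight. Then there exists c such that for every sequence s ∈ c₀, sup_N (η(N)/N)·∑_{j=1}^N s_j* ≤ c·sup_j η(j)·s_j* holds if and only if ∑_{j=1}^N 1/η(j) ≤ c·N/η(N) for all N ≥ 1, where (s_j*) denotes the nonincreasing rearrangement of (|s_n|). -/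
/-- Lemma 2.11(ii): for a positive nondecreasing weight `η` and constant `c`,
the embedding `ℓ^∞_η ↪ m(η)` with norm `c` — i.e. for every `s ∈ c₀` (represented through its
nonincreasing rearrangement: `s` nonnegative, nonincreasing, tending to `0`),
`sup_N (η N / N)·∑_{j=1}^N s j ≤ c·sup_j η j·s j` (the sups rendered via upper bounds `B`) —
holds iff `∑_{j=1}^N 1/η j ≤ c·N/η N` for all `N ≥ 1`. -/
theorem stmt_5 (η : ℕ → ℝ)
    (hpos : ∀ j, 1 ≤ j → 0 < η j)
    (hmono : ∀ j, 1 ≤ j → η j ≤ η (j + 1)) (c : ℝ) :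
    (∀ s : ℕ → ℝ, (∀ j, 0 ≤ s j) → (∀ j, 1 ≤ j → s (j + 1) ≤ s j) →
        Filter.Tendsto s Filter.atTop (nhds 0) →
        ∀ B : ℝ, (∀ j, 1 ≤ j → η j * s j ≤ B) →
        ∀ N, 1 ≤ N → (η N / N) * ∑ j ∈ Finset.Icc 1 N, s j ≤ c * B)
      ↔ (∀ N, 1 ≤ N → ∑ j ∈ Finset.Icc 1 N, 1 / η j ≤ c * N / η N) := by
  have hmono' : ∀ j k, 1 ≤ j → j ≤ k → η j ≤ η k := by
    intro j k hj hjk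
    induction k with
    | zero => exact absurd hjk (by omega)
    | succ n ih =>
        rcases Nat.lt_or_ge j (n + 1) with h | h
        · exact le_trans (ih (by omega)) (hmono n (by omega))
        · have hjn : j = n + 1 := by omega
          rw [hjn]
  constructor
  · intro H N hN
    set s : ℕ → ℝ := fun j => if 1 ≤ j ∧ j ≤ N then 1 / η j else 0 with hs
    have h1 : ∀ j, 0 ≤ s j := by
      intro j
      simp only [hs]
      split
      · next h => exact div_nonneg zero_le_one (le_of_lt (hpos j h.1))
      · exact le_rfl
    have h2 : ∀ j, 1 ≤ j → s (j + 1) ≤ s j := by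
      intro j hj
      simp only [hs]
      by_cases hjn : j + 1 ≤ N
      · have hj' : j ≤ N := by omega
        rw [if_pos (⟨by omega, hjn⟩ : 1 ≤ j + 1 ∧ j + 1 ≤ N), if_pos ⟨hj, hj'⟩]
        have h1j := hpos j hj
        have h2j := hpos (j+1) (by omega)
        exact one_div_le_one_div_of_le h1j (hmono j hj)
      · rw [if_neg (by omega)]
        exact h1 j
    have h3 : Filter.Tendsto s Filter.atTop (nhds 0) := by
      have : ∀ j ≥ N + 1, s j = 0 := by
        intro j hj
        simp only [hs]
        rw [if_neg (by omega)]
      exact tendsto_atTop_of_eventually_const this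
    have h4 : ∀ j, 1 ≤ j → η j * s j ≤ 1 := by
      intro j hj
      simp only [hs]
      by_cases hjn : j ≤ N
      · rw [if_pos ⟨hj, hjn⟩]
        rw [mul_one_div, div_self (ne_of_gt (hpos j hj))]
      · rw [if_neg (by omega), mul_zero]; norm_num
    have key := H s h1 h2 h3 1 h4 N hN
    have hsum : ∑ j ∈ Finset.Icc 1 N, s j = ∑ j ∈ Finset.Icc 1 N, 1 / η j := by
      apply Finset.sum_congr rfl
      intro j hj
      rw [Finset.mem_Icc] at hj
      simp only [hs]
      rw [if_pos hj]
    rw [hsum, mul_one] at key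
    have hηN := hpos N hN
    have hNpos : (0:ℝ) < (N:ℝ) := by exact_mod_cast Nat.pos_of_ne_zero (by omega)
    rw [div_mul_eq_mul_div, div_le_iff₀ hNpos] at key
    rw [le_div_iff₀ hηN]
    have hsn : (0:ℝ) ≤ ∑ j ∈ Finset.Icc 1 N, 1 / η j := by
      apply Finset.sum_nonneg
      intro j hj
      rw [Finset.mem_Icc] at hj
      exact div_nonneg zero_le_one (le_of_lt (hpos j hj.1))
    nlinarith
  · intro H s hs hmon htend B hB N hN
    have hB0 : 0 ≤ B := le_trans (mul_nonneg (le_of_lt (hpos 1 le_rfl)) (hs 1)) (hB 1 le_rfl)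
    have hηN := hpos N hN
    have hNpos : (0:ℝ) < (N:ℝ) := by exact_mod_cast Nat.pos_of_ne_zero (by omega)
    have hsum : ∑ j ∈ Finset.Icc 1 N, s j ≤ B * ∑ j ∈ Finset.Icc 1 N, 1 / η j := by
      rw [Finset.mul_sum]
      apply Finset.sum_le_sum
      intro j hj
      rw [Finset.mem_Icc] at hj
      have hηj := hpos j hj.1
      have hbj := hB j hj.1
      rw [mul_one_div, le_div_iff₀ hηj]
      nlinarith
    calc (η N / (N:ℝ)) * ∑ j ∈ Finset.Icc 1 N, s j
        ≤ (η N / (N:ℝ)) * (B * ∑ j ∈ Finset.Icc 1 N, 1 / η j) := by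
          apply mul_le_mul_of_nonneg_left hsum (by positivity)
      _ ≤ (η N / (N:ℝ)) * (B * (c * N / η N)) := by
          apply mul_le_mul_of_nonneg_left _ (by positivity)
          exact mul_le_mul_of_nonneg_left (H N hN) hB0
      _ = c * B := by field_simp
end

section
/- For sequences a = (a_j) and b = (b_j) in c₀ with nonincreasing rearrangements (a_j*), (b_j*), and a positive nondecreasing weight η: if sup_N (1/η(N))∑_{j=1}^N b_j* ≤ B, then ∑_{j=1}^∞ a_j*·b_j* ≤ B·∑_{j=1}^∞ a_j*·(η(j) − η(j−1)), where η(0) = 0. -/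
lemma icc_eq_range_shift (f : ℕ → ℝ) (N : ℕ) :
    ∑ j ∈ Finset.Icc 1 N, f j = ∑ i ∈ Finset.range N, f (i + 1) := by
  rw [← Finset.Ico_add_one_right_eq_Icc, Finset.sum_Ico_eq_sum_range]
  simp [add_comm]

/-- the Abel-summation inequality \eqref{dualab}: for nonincreasing
nonnegative sequences `a = (a_j*)`, `b = (b_j*)` in `c₀` and a positive nondecreasing
weight `η` with `η 0 = 0`: if `sup_N (1/η N)·∑_{j=1}^N b j ≤ B`, then
`∑_{j=1}^∞ a j·b j ≤ B·∑_{j=1}^∞ a j·(η j − η (j−1))` (the right-hand side being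
a member of `ℓ¹_{η̂}`, i.e. summable). -/
theorem stmt_8 (η : ℕ → ℝ) (hη0 : η 0 = 0)
    (hpos : ∀ j, 1 ≤ j → 0 < η j)
    (hmono : ∀ j, 1 ≤ j → η j ≤ η (j + 1))
    (a b : ℕ → ℝ) (ha0 : ∀ j, 0 ≤ a j) (hb0 : ∀ j, 0 ≤ b j)
    (ham : ∀ j, 1 ≤ j → a (j + 1) ≤ a j) (hbm : ∀ j, 1 ≤ j → b (j + 1) ≤ b j)
    (hac : Filter.Tendsto a Filter.atTop (nhds 0))
    (hbc : Filter.Tendsto b Filter.atTop (nhds 0))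
    (hsum : Summable (fun j : ℕ => a (j + 1) * (η (j + 1) - η j)))
    (B : ℝ) (hB : ∀ N, 1 ≤ N → (1 / η N) * ∑ j ∈ Finset.Icc 1 N, b j ≤ B) :
    ∑' j : ℕ, a (j + 1) * b (j + 1) ≤ B * ∑' j : ℕ, a (j + 1) * (η (j + 1) - η j) := by
  -- partial sums of b
  set S : ℕ → ℝ := fun N => ∑ i ∈ Finset.range N, b (i + 1) with hS
  -- S N ≤ B * η N for N ≥ 1
  have hSB : ∀ N : ℕ, 1 ≤ N → S N ≤ B * η N := by
    intro N hN
    have h := hB N hN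
    have hpN := hpos N hN
    rw [icc_eq_range_shift] at h
    have h2 := mul_le_mul_of_nonneg_right h hpN.le
    rw [one_div, inv_mul_eq_div, div_mul_cancel₀ _ hpN.ne'] at h2
    exact h2
  -- B ≥ 0
  have hB0 : 0 ≤ B := by
    have h1 := hSB 1 le_rfl
    have : S 1 = b 1 := by simp [hS]
    nlinarith [hb0 1, hpos 1 le_rfl, h1]
  -- nonnegativity of the η increments
  have hΔ : ∀ i : ℕ, 0 ≤ η (i + 1) - η i := by
    intro i
    rcases Nat.eq_zero_or_pos i with h0 | h1
    · subst h0; rw [hη0]; simpa using (hpos 1 le_rfl).le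
    · linarith [hmono i h1]
  -- the key Abel-summation estimate
  have key : ∀ N : ℕ,
      ∑ i ∈ Finset.range (N + 1), a (i + 1) * b (i + 1)
        + a (N + 1) * (B * η (N + 1) - S (N + 1))
      ≤ B * ∑ i ∈ Finset.range (N + 1), a (i + 1) * (η (i + 1) - η i) := by
    intro N
    induction N with
    | zero => simp [hS, hη0]; ring_nf; simp
    | succ n ih =>
      have hslack : 0 ≤ B * η (n + 1) - S (n + 1) := by
        linarith [hSB (n + 1) (Nat.le_add_left 1 n)]
      have haN : a (n + 1 + 1) ≤ a (n + 1) := ham (n + 1) (Nat.le_add_left 1 n)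
      have hSstep : S (n + 2) = S (n + 1) + b (n + 2) := by
        simp [hS, Finset.sum_range_succ]
      rw [Finset.sum_range_succ, Finset.sum_range_succ
        (fun i => a (i + 1) * (η (i + 1) - η i)), hSstep, mul_add]
      nlinarith [mul_le_mul_of_nonneg_right haN hslack]
  -- partial-sum bound for a·b
  have T0 : 0 ≤ ∑' j : ℕ, a (j + 1) * (η (j + 1) - η j) :=
    tsum_nonneg fun j => mul_nonneg (ha0 _) (hΔ j)
  have hpartial : ∀ n : ℕ, ∑ i ∈ Finset.range n, a (i + 1) * b (i + 1)
      ≤ B * ∑' j : ℕ, a (j + 1) * (η (j + 1) - η j) := by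
    intro n
    cases n with
    | zero => simpa using mul_nonneg hB0 T0
    | succ N =>
      have h1 := key N
      have hslack : 0 ≤ a (N + 1) * (B * η (N + 1) - S (N + 1)) := by
        have := hSB (N + 1) (Nat.le_add_left 1 N)
        exact mul_nonneg (ha0 _) (by linarith)
      have h2 : ∑ i ∈ Finset.range (N + 1), a (i + 1) * (η (i + 1) - η i)
          ≤ ∑' j : ℕ, a (j + 1) * (η (j + 1) - η j) :=
        Summable.sum_le_tsum _ (fun j _ => mul_nonneg (ha0 _) (hΔ j)) hsum
      calc ∑ i ∈ Finset.range (N + 1), a (i + 1) * b (i + 1)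
          ≤ B * ∑ i ∈ Finset.range (N + 1), a (i + 1) * (η (i + 1) - η i) := by
            linarith [h1, hslack]
        _ ≤ B * ∑' j : ℕ, a (j + 1) * (η (j + 1) - η j) :=
            mul_le_mul_of_nonneg_left h2 hB0
  exact Real.tsum_le_of_sum_range_le
    (fun j => mul_nonneg (ha0 _) (hb0 _)) hpartial
end

section
/- Let X be a Banach space with a biorthogonal system {e_n, e*_n} and η a positive weight. Then ‖∑_{n∈A} ε_n e*_n‖_{X*} ≤ η(|A|) for all finite A and all unimodular signs ε if and only if for every x ∈ X and every N, (1/η(N))·∑_{j=1}^N a_j*(x) ≤ ‖x‖, where (a_j*(x)) is the nonincreasing rearrangement of (|e*_n(x)|). -/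
/-- Theorem 1.3: let `{e_n, e*_n}` be a seminormalized complete
biorthogonal system in a Banach space `X` over `𝕜 = ℝ` or `ℂ`, and `η` a positive weight.
Then `‖∑_{n∈A} ε_n e*_n‖ ≤ η |A|` for all finite (nonempty) `A` and unimodular `ε` iff
for every `x ∈ X` and `N ≥ 1`, `(1/η N)·∑_{j=1}^N a_j*(x) ≤ ‖x‖`; since
`∑_{j=1}^N a_j*(x) = sup_{|A| = N} ∑_{n∈A} |e*_n x|`, the latter is rendered as:
for every set `A` with `|A| = N`, `(1/η N)·∑_{n∈A} ‖e*_n x‖ ≤ ‖x‖`. -/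
theorem stmt_10 {𝕜 : Type*} [RCLike 𝕜] {X : Type*} [NormedAddCommGroup X]
    [NormedSpace 𝕜 X] [CompleteSpace X]
    (e : ℕ → X) (es : ℕ → X →L[𝕜] 𝕜)
    (hbi : ∀ n m, es n (e m) = if n = m then 1 else 0)
    (hsemi : ∃ c₁ c₂ : ℝ, 0 < c₁ ∧
      ∀ n, c₁ ≤ ‖e n‖ ∧ ‖e n‖ ≤ c₂ ∧ c₁ ≤ ‖es n‖ ∧ ‖es n‖ ≤ c₂)
    (hcomplete : (Submodule.span 𝕜 (Set.range e)).topologicalClosure = ⊤)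
    (η : ℕ → ℝ) (hpos : ∀ j, 1 ≤ j → 0 < η j) :
    (∀ A : Finset ℕ, A.Nonempty → ∀ ε : ℕ → 𝕜, (∀ n, ‖ε n‖ = 1) →
        ‖∑ n ∈ A, ε n • es n‖ ≤ η A.card)
      ↔ (∀ x : X, ∀ N, 1 ≤ N → ∀ A : Finset ℕ, A.card = N →
          (1 / η N) * ∑ n ∈ A, ‖es n x‖ ≤ ‖x‖) := by
  constructor
  · intro h x N hN A hA
    set ε : ℕ → 𝕜 := fun n => if es n x = 0 then 1 else (‖es n x‖ : 𝕜) / es n x with hε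
    have hεnorm : ∀ n, ‖ε n‖ = 1 := by
      intro n
      by_cases h0 : es n x = 0
      · simp [hε, h0]
      · simp [hε, h0, norm_div, norm_ne_zero_iff.mpr h0,
          div_self (norm_ne_zero_iff.mpr h0)]
    have hεmul : ∀ n, ε n * es n x = (‖es n x‖ : 𝕜) := by
      intro n
      by_cases h0 : es n x = 0
      · simp [hε, h0]
      · rw [hε]; dsimp only; rw [if_neg h0]; exact div_mul_cancel₀ _ h0
    have hANe : A.Nonempty := Finset.card_pos.mp (hA ▸ hN)
    have hηpos : 0 < η N := hpos N hN
    have key : (∑ n ∈ A, ε n • es n) x = ((∑ n ∈ A, ‖es n x‖ : ℝ) : 𝕜) := by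
      simp only [ContinuousLinearMap.sum_apply, ContinuousLinearMap.smul_apply,
        smul_eq_mul]
      rw [RCLike.ofReal_sum]
      exact Finset.sum_congr rfl fun n _ => hεmul n
    have h1 : (∑ n ∈ A, ‖es n x‖) ≤ η N * ‖x‖ := by
      have := (∑ n ∈ A, ε n • es n).le_opNorm x
      rw [key] at this
      have h2 : ‖((∑ n ∈ A, ‖es n x‖ : ℝ) : 𝕜)‖ = ∑ n ∈ A, ‖es n x‖ := by
        rw [RCLike.norm_ofReal, abs_of_nonneg]
        exact Finset.sum_nonneg fun n _ => norm_nonneg _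
      rw [h2] at this
      calc ∑ n ∈ A, ‖es n x‖ ≤ ‖∑ n ∈ A, ε n • es n‖ * ‖x‖ := this
        _ ≤ η N * ‖x‖ := by
            apply mul_le_mul_of_nonneg_right _ (norm_nonneg x)
            simpa [hA] using h A hANe ε hεnorm
    rw [one_div, inv_mul_le_iff₀ hηpos]
    linarith
  · intro h A hANe ε hεnorm
    have hN : 1 ≤ A.card := Finset.card_pos.mpr hANe
    have hηpos : 0 < η A.card := hpos _ hN
    apply ContinuousLinearMap.opNorm_le_bound _ hηpos.le
    intro x
    have h1 : (1 / η A.card) * ∑ n ∈ A, ‖es n x‖ ≤ ‖x‖ := h x A.card hN A rfl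
    have h2 : ∑ n ∈ A, ‖es n x‖ ≤ η A.card * ‖x‖ := by
      rw [one_div, inv_mul_le_iff₀ hηpos] at h1
      linarith
    calc ‖(∑ n ∈ A, ε n • es n) x‖
        = ‖∑ n ∈ A, ε n * es n x‖ := by
          simp [ContinuousLinearMap.sum_apply]
      _ ≤ ∑ n ∈ A, ‖ε n * es n x‖ := norm_sum_le _ _
      _ = ∑ n ∈ A, ‖es n x‖ := by
          refine Finset.sum_congr rfl fun n _ => ?_
          rw [norm_mul, hεnorm n, one_mul]
      _ ≤ η A.card * ‖x‖ := h2
end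

section
/- In the space KT(p, r) (1 < p < ∞, 1 ≤ r ≤ ∞) of sequences x ∈ c₀ with norm ‖x‖ = max{‖x‖_{ℓ^{p,r}}, sup_N |∑_{n=1}^N x_n/n^{1/p'}|}, the canonical basis satisfies: for every finite A with |A| = N and signs ε, c_{p,r}·N^{1/p} ≤ ‖∑_{n∈A} ε_n e_n‖ ≤ p·N^{1/p} for some constant c_{p,r} > 0 independent of N. -/
open Finset Real

/-- Key step: for `0 < a ≤ 1` and `j ≥ 1`, `(j-1)^a + a*j^(a-1) ≤ j^a`. -/
lemma stmt19_step {a : ℝ} (ha : 0 < a) (ha1 : a ≤ 1) {j : ℕ} (hj : 1 ≤ j) :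
    ((j : ℝ) - 1) ^ a + a * (j : ℝ) ^ (a - 1) ≤ (j : ℝ) ^ a := by
  have hj1 : (1 : ℝ) ≤ (j : ℝ) := by exact_mod_cast hj
  have hj0 : (0 : ℝ) < (j : ℝ) := lt_of_lt_of_le one_pos hj1
  have hs : (-1 : ℝ) ≤ -(1 / (j : ℝ)) := by
    rw [neg_le_neg_iff]
    exact div_le_one_of_le₀ hj1 hj0.le
  have hB := rpow_one_add_le_one_add_mul_self hs ha.le ha1
  -- (1 - 1/j)^a ≤ 1 - a/j
  have h1 : (1 : ℝ) + -(1 / (j : ℝ)) = 1 - 1 / j := by ring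
  have hfac : ((j : ℝ) - 1) = (j : ℝ) * (1 - 1 / j) := by
    field_simp
  have h2 : ((j : ℝ) - 1) ^ a = (j : ℝ) ^ a * (1 - 1 / j) ^ a := by
    rw [hfac, Real.mul_rpow hj0.le (by
      rw [sub_nonneg]; exact div_le_one_of_le₀ hj1 hj0.le)]
  have h3 : (j : ℝ) ^ (a - 1) = (j : ℝ) ^ a / j := Real.rpow_sub_one hj0.ne' a
  rw [h2, h3]
  have hpow : (0 : ℝ) ≤ (j : ℝ) ^ a := Real.rpow_nonneg hj0.le a
  calc (j : ℝ) ^ a * (1 - 1 / j) ^ a + a * ((j : ℝ) ^ a / j)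
      ≤ (j : ℝ) ^ a * (1 + a * -(1 / j)) + a * ((j : ℝ) ^ a / j) := by
        gcongr
        · rw [← h1]; exact hB
    _ = (j : ℝ) ^ a := by field_simp; ring

lemma stmt19_tel {a : ℝ} (ha : 0 < a) (N : ℕ) :
    ∑ j ∈ Finset.Icc 1 N, ((j : ℝ) ^ a - ((j : ℝ) - 1) ^ a) = (N : ℝ) ^ a := by
  induction N with
  | zero => simp [Real.zero_rpow ha.ne']
  | succ n ihn =>
    rw [Finset.sum_Icc_succ_top (by omega : 1 ≤ n + 1), ihn]
    push_cast
    ring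

/-- `∑_{j=1}^N j^(a-1) ≤ N^a / a` for `0 < a ≤ 1`. -/
lemma stmt19_sum_le {a : ℝ} (ha : 0 < a) (ha1 : a ≤ 1) (N : ℕ) :
    ∑ j ∈ Finset.Icc 1 N, (j : ℝ) ^ (a - 1) ≤ (N : ℝ) ^ a / a := by
  rw [le_div_iff₀ ha]
  have key : ∀ j ∈ Finset.Icc 1 N, a * (j : ℝ) ^ (a - 1) ≤ (j : ℝ) ^ a - ((j : ℝ) - 1) ^ a := by
    intro j hj
    have := stmt19_step ha ha1 (Finset.mem_Icc.mp hj).1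
    linarith
  calc (∑ j ∈ Finset.Icc 1 N, (j : ℝ) ^ (a - 1)) * a
      = ∑ j ∈ Finset.Icc 1 N, a * (j : ℝ) ^ (a - 1) := by
        rw [Finset.sum_mul]; exact Finset.sum_congr rfl fun j _ => mul_comm _ _
    _ ≤ ∑ j ∈ Finset.Icc 1 N, ((j : ℝ) ^ a - ((j : ℝ) - 1) ^ a) := Finset.sum_le_sum key
    _ = (N : ℝ) ^ a := stmt19_tel ha N

/-- Sum of an antitone power over a set of `N` integers `≥ 1` is at most the sum over `[1,N]`. -/
lemma stmt19_card_sum {b : ℝ} (hb : b ≤ 0) :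
    ∀ (N : ℕ) (A : Finset ℕ), (∀ n ∈ A, 1 ≤ n) → A.card = N →
    ∑ n ∈ A, (n : ℝ) ^ b ≤ ∑ j ∈ Finset.Icc 1 N, (j : ℝ) ^ b := by
  intro N
  induction N with
  | zero => intro A _ hc; simp [Finset.card_eq_zero.mp hc]
  | succ N ih =>
    intro A hA hc
    have hne : A.Nonempty := Finset.card_pos.mp (by omega)
    set m := A.max' hne with hm
    have hmA : m ∈ A := A.max'_mem hne
    have hsub : A ⊆ Finset.Icc 1 m := fun x hx =>
      Finset.mem_Icc.mpr ⟨hA x hx, A.le_max' x hx⟩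
    have hmN : N + 1 ≤ m := by
      have := Finset.card_le_card hsub
      rw [hc, Nat.card_Icc] at this
      omega
    have h1m : (0 : ℝ) < (N + 1 : ℕ) := by positivity
    have hmono : (m : ℝ) ^ b ≤ ((N + 1 : ℕ) : ℝ) ^ b :=
      Real.rpow_le_rpow_of_nonpos h1m (by exact_mod_cast hmN) hb
    have herase : (A.erase m).card = N := by rw [Finset.card_erase_of_mem hmA, hc]; omega
    have hih := ih (A.erase m) (fun n hn => hA n (Finset.mem_of_mem_erase hn)) herase
    calc ∑ n ∈ A, (n : ℝ) ^ b = (m : ℝ) ^ b + ∑ n ∈ A.erase m, (n : ℝ) ^ b :=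
          (Finset.add_sum_erase _ _ hmA).symm
      _ ≤ ((N + 1 : ℕ) : ℝ) ^ b + ∑ j ∈ Finset.Icc 1 N, (j : ℝ) ^ b := by gcongr
      _ = ∑ j ∈ Finset.Icc 1 (N + 1), (j : ℝ) ^ b := by
          rw [Finset.sum_Icc_succ_top (by omega : 1 ≤ N + 1)]; ring

section scratch
variable {p t : ℝ}

lemma stmt19_tsum_eq (hp : 0 < p) (ht : 1 ≤ t) (N : ℕ) :
    ∑' j : ℕ, ((j : ℝ) ^ (1 / p) * (if j ∈ Finset.Icc 1 N then (1 : ℝ) else 0)) ^ t / j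
      = ∑ j ∈ Finset.Icc 1 N, (j : ℝ) ^ (t / p - 1) := by
  rw [tsum_eq_sum (s := Finset.Icc 1 N) (fun j hj => by
    rw [if_neg hj, mul_zero, Real.zero_rpow (by linarith : t ≠ 0), zero_div])]
  refine Finset.sum_congr rfl fun j hj => ?_
  have hj1 : 1 ≤ j := (Finset.mem_Icc.mp hj).1
  have hj0 : (0 : ℝ) < j := by exact_mod_cast hj1
  rw [if_pos hj, mul_one, ← Real.rpow_mul hj0.le,
    show (1 / p) * t = t / p by ring, Real.rpow_sub_one hj0.ne']

lemma stmt19_S_upper (hp : 1 < p) (ht : 1 ≤ t) {N : ℕ} (hN : 1 ≤ N) :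
    ∑ j ∈ Finset.Icc 1 N, (j : ℝ) ^ (t / p - 1) ≤ p * (N : ℝ) ^ (t / p) := by
  have hp0 : (0 : ℝ) < p := by linarith
  have ht0 : (0 : ℝ) < t := by linarith
  have ha : 0 < t / p := div_pos ht0 hp0
  have hNR : (1 : ℝ) ≤ (N : ℝ) := by exact_mod_cast hN
  have hNpos : (0 : ℝ) < (N : ℝ) := by linarith
  rcases le_or_gt (t / p) 1 with h1 | h1
  · calc ∑ j ∈ Finset.Icc 1 N, (j : ℝ) ^ (t / p - 1)
        ≤ (N : ℝ) ^ (t / p) / (t / p) := stmt19_sum_le ha h1 N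
      _ = (p / t) * (N : ℝ) ^ (t / p) := by field_simp
      _ ≤ p * (N : ℝ) ^ (t / p) := by
          refine mul_le_mul_of_nonneg_right ?_ (Real.rpow_nonneg hNpos.le _)
          calc p / t ≤ p / 1 := by gcongr
            _ = p := div_one p
  · calc ∑ j ∈ Finset.Icc 1 N, (j : ℝ) ^ (t / p - 1)
        ≤ ∑ _j ∈ Finset.Icc 1 N, (N : ℝ) ^ (t / p - 1) := by
          refine Finset.sum_le_sum fun j hj => ?_
          have := Finset.mem_Icc.mp hj
          have hj0 : (0 : ℝ) ≤ j := Nat.cast_nonneg j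
          exact Real.rpow_le_rpow hj0 (by exact_mod_cast this.2) (by linarith)
      _ = (N : ℝ) * (N : ℝ) ^ (t / p - 1) := by
          rw [Finset.sum_const, Nat.card_Icc]
          simp [nsmul_eq_mul]
      _ = (N : ℝ) ^ (t / p) := by
          rw [Real.rpow_sub_one hNpos.ne']
          field_simp
      _ ≤ p * (N : ℝ) ^ (t / p) := by
          nlinarith [Real.rpow_nonneg hNpos.le (t / p)]

lemma stmt19_S_lower (hp : 1 < p) (ht : 1 ≤ t) {N : ℕ} (hN : 1 ≤ N) :
    (1 / 2) * ((N : ℝ) / 2) ^ (t / p) ≤ ∑ j ∈ Finset.Icc 1 N, (j : ℝ) ^ (t / p - 1) := by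
  have hp0 : (0 : ℝ) < p := by linarith
  have ht0 : (0 : ℝ) < t := by linarith
  have ha : 0 < t / p := div_pos ht0 hp0
  have hNR : (1 : ℝ) ≤ (N : ℝ) := by exact_mod_cast hN
  have hNpos : (0 : ℝ) < (N : ℝ) := by linarith
  have hsub : Finset.Ioc (N / 2) N ⊆ Finset.Icc 1 N := by
    intro j hj
    have := Finset.mem_Ioc.mp hj
    exact Finset.mem_Icc.mpr ⟨by omega, this.2⟩
  have hbound : ∀ j ∈ Finset.Ioc (N / 2) N,
      ((N : ℝ) / 2) ^ (t / p) / N ≤ (j : ℝ) ^ (t / p - 1) := by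
    intro j hj
    have hjm := Finset.mem_Ioc.mp hj
    have hj1 : 1 ≤ j := by omega
    have hj0 : (0 : ℝ) < j := by exact_mod_cast hj1
    have hjN : (j : ℝ) ≤ N := by exact_mod_cast hjm.2
    have hjh : (N : ℝ) / 2 ≤ (j : ℝ) := by
      have : N < 2 * (N / 2 + 1) := by omega
      have h2 : (N : ℝ) < 2 * ((N / 2 : ℕ) + 1 : ℕ) := by exact_mod_cast this
      have h3 : ((N / 2 + 1 : ℕ) : ℝ) ≤ (j : ℝ) := by exact_mod_cast hjm.1
      push_cast at h2 h3 ⊢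
      linarith
    rw [Real.rpow_sub_one hj0.ne']
    apply div_le_div₀ (Real.rpow_nonneg hj0.le _) _ hj0 hjN
    exact Real.rpow_le_rpow (by positivity) hjh ha.le
  have hcard : (N : ℝ) / 2 ≤ ((Finset.Ioc (N / 2) N).card : ℝ) := by
    rw [Nat.card_Ioc]
    have : N ≤ 2 * (N - N / 2) := by omega
    have h2 : (N : ℝ) ≤ 2 * ((N - N / 2 : ℕ) : ℝ) := by exact_mod_cast this
    linarith
  calc (1 / 2) * ((N : ℝ) / 2) ^ (t / p)
      = ((N : ℝ) / 2) * (((N : ℝ) / 2) ^ (t / p) / N) := by field_simp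
    _ ≤ ((Finset.Ioc (N / 2) N).card : ℝ) * (((N : ℝ) / 2) ^ (t / p) / N) :=
        mul_le_mul_of_nonneg_right hcard (by positivity)
    _ ≤ ∑ j ∈ Finset.Ioc (N / 2) N, (j : ℝ) ^ (t / p - 1) := by
        rw [← nsmul_eq_mul]
        exact Finset.card_nsmul_le_sum _ _ _ hbound
    _ ≤ ∑ j ∈ Finset.Icc 1 N, (j : ℝ) ^ (t / p - 1) := by
        refine Finset.sum_le_sum_of_subset_of_nonneg hsub fun j _ _ => ?_
        positivity

lemma stmt19_F2_le (hp : 1 < p) {N : ℕ} (A : Finset ℕ) (hA : ∀ n ∈ A, 1 ≤ n)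
    (hcard : A.card = N) (ε : ℕ → ℝ) (hε : ∀ n, |ε n| = 1) (M : ℕ) :
    |∑ n ∈ Finset.Icc 1 M, (if n ∈ A then ε n else 0) / (n : ℝ) ^ (1 - 1 / p)|
      ≤ p * (N : ℝ) ^ (1 / p) := by
  have hp0 : (0 : ℝ) < p := by linarith
  have ha : 0 < 1 / p := by positivity
  have ha1 : 1 / p ≤ 1 := by
    rw [div_le_one hp0]; linarith
  calc |∑ n ∈ Finset.Icc 1 M, (if n ∈ A then ε n else 0) / (n : ℝ) ^ (1 - 1 / p)|
      ≤ ∑ n ∈ Finset.Icc 1 M, |(if n ∈ A then ε n else 0) / (n : ℝ) ^ (1 - 1 / p)| :=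
        Finset.abs_sum_le_sum_abs _ _
    _ = ∑ n ∈ Finset.Icc 1 M, (if n ∈ A then (n : ℝ) ^ (1 / p - 1) else 0) := by
        refine Finset.sum_congr rfl fun n hn => ?_
        have hn1 : 1 ≤ n := (Finset.mem_Icc.mp hn).1
        have hn0 : (0 : ℝ) < n := by exact_mod_cast hn1
        rw [abs_div, abs_of_nonneg (Real.rpow_nonneg hn0.le _)]
        by_cases h : n ∈ A
        · rw [if_pos h, if_pos h, hε n,
            show (1 : ℝ) / p - 1 = -(1 - 1 / p) by ring,
            Real.rpow_neg hn0.le, one_div]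
        · rw [if_neg h, if_neg h, abs_zero, zero_div]
    _ = ∑ n ∈ Finset.Icc 1 M ∩ A, (n : ℝ) ^ (1 / p - 1) := Finset.sum_ite_mem _ _ _
    _ ≤ ∑ n ∈ A, (n : ℝ) ^ (1 / p - 1) := by
        refine Finset.sum_le_sum_of_subset_of_nonneg (Finset.inter_subset_right) fun n hn _ => ?_
        positivity
    _ ≤ ∑ j ∈ Finset.Icc 1 N, (j : ℝ) ^ (1 / p - 1) :=
        stmt19_card_sum (by linarith) N A hA hcard
    _ ≤ (N : ℝ) ^ (1 / p) / (1 / p) := stmt19_sum_le ha ha1 N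
    _ = p * (N : ℝ) ^ (1 / p) := by field_simp

end scratch

/-- Lemma 8.8, democracy functions of the canonical basis of `KT(p,r)`:
in the Konyagin–Temlyakov space `KT(p,r)` (`1 < p < ∞`, `1 ≤ r ≤ ∞`), whose norm is
`‖x‖ = max{ ‖x‖_{ℓ^{p,r}}, sup_M |∑_{n=1}^M x_n / n^{1/p'}| }`, there is a constant
`c = c_{p,r} > 0` such that for every finite `A ⊆ {1,2,…}` with `|A| = N ≥ 1` and signs
`ε` of modulus one: `c·N^{1/p} ≤ ‖1_{εA}‖ ≤ p·N^{1/p}`. Here `x = 1_{εA}` has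
`x n = ε n` for `n ∈ A`, `0` otherwise, and `|x|` has nonincreasing rearrangement
`x* = 1_{[1,N]}`, so `‖x‖_{ℓ^{p,r}} = (∑'_j (j^{1/p}·x*_j)^r / j)^{1/r}`
(for `r = ∞`, `sup_j j^{1/p}·x*_j`); also `1/p' = 1 − 1/p`. -/
theorem stmt_19 (p : ℝ) (hp : 1 < p) (r : ENNReal) (hr : 1 ≤ r) :
    ∃ c : ℝ, 0 < c ∧ ∀ N : ℕ, 1 ≤ N → ∀ A : Finset ℕ, (∀ n ∈ A, 1 ≤ n) → A.card = N →
      ∀ ε : ℕ → ℝ, (∀ n, |ε n| = 1) →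
      c * (N : ℝ) ^ (1 / p) ≤
          max
            (if r = ⊤ then
              ⨆ j : ℕ, (j : ℝ) ^ (1 / p) * (if j ∈ Finset.Icc 1 N then (1 : ℝ) else 0)
            else
              (∑' j : ℕ, ((j : ℝ) ^ (1 / p) *
                (if j ∈ Finset.Icc 1 N then (1 : ℝ) else 0)) ^ r.toReal / j) ^ (1 / r.toReal))
            (⨆ M : ℕ, |∑ n ∈ Finset.Icc 1 M,
              (if n ∈ A then ε n else 0) / (n : ℝ) ^ (1 - 1 / p)|) ∧
        max
            (if r = ⊤ then
              ⨆ j : ℕ, (j : ℝ) ^ (1 / p) * (if j ∈ Finset.Icc 1 N then (1 : ℝ) else 0)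
            else
              (∑' j : ℕ, ((j : ℝ) ^ (1 / p) *
                (if j ∈ Finset.Icc 1 N then (1 : ℝ) else 0)) ^ r.toReal / j) ^ (1 / r.toReal))
            (⨆ M : ℕ, |∑ n ∈ Finset.Icc 1 M,
              (if n ∈ A then ε n else 0) / (n : ℝ) ^ (1 - 1 / p)|) ≤
          p * (N : ℝ) ^ (1 / p) := by
  refine ⟨1 / 4, by norm_num, ?_⟩
  intro N hN A hA hcard ε hε
  have hp0 : (0 : ℝ) < p := by linarith
  have hNR : (1 : ℝ) ≤ (N : ℝ) := by exact_mod_cast hN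
  have hNpos : (0 : ℝ) < (N : ℝ) := by linarith
  have hNrp : (0 : ℝ) ≤ (N : ℝ) ^ (1 / p) := Real.rpow_nonneg hNpos.le _
  have hF2le : (⨆ M : ℕ, |∑ n ∈ Finset.Icc 1 M,
      (if n ∈ A then ε n else 0) / (n : ℝ) ^ (1 - 1 / p)|) ≤ p * (N : ℝ) ^ (1 / p) :=
    ciSup_le fun M => stmt19_F2_le hp A hA hcard ε hε M
  have hF1le : (if r = ⊤ then
        ⨆ j : ℕ, (j : ℝ) ^ (1 / p) * (if j ∈ Finset.Icc 1 N then (1 : ℝ) else 0)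
      else
        (∑' j : ℕ, ((j : ℝ) ^ (1 / p) *
          (if j ∈ Finset.Icc 1 N then (1 : ℝ) else 0)) ^ r.toReal / j) ^ (1 / r.toReal))
      ≤ p * (N : ℝ) ^ (1 / p) ∧
      (1 / 4 : ℝ) * (N : ℝ) ^ (1 / p) ≤ (if r = ⊤ then
        ⨆ j : ℕ, (j : ℝ) ^ (1 / p) * (if j ∈ Finset.Icc 1 N then (1 : ℝ) else 0)
      else
        (∑' j : ℕ, ((j : ℝ) ^ (1 / p) *
          (if j ∈ Finset.Icc 1 N then (1 : ℝ) else 0)) ^ r.toReal / j) ^ (1 / r.toReal)) := by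
    rcases eq_or_ne r ⊤ with h | h
    · rw [if_pos h]
      have hub : ∀ j : ℕ, (j : ℝ) ^ (1 / p) * (if j ∈ Finset.Icc 1 N then (1 : ℝ) else 0)
          ≤ (N : ℝ) ^ (1 / p) := by
        intro j
        by_cases hj : j ∈ Finset.Icc 1 N
        · rw [if_pos hj, mul_one]
          exact Real.rpow_le_rpow (Nat.cast_nonneg j)
            (by exact_mod_cast (Finset.mem_Icc.mp hj).2) (by positivity)
        · rw [if_neg hj, mul_zero]; exact hNrp
      constructor
      · refine (ciSup_le hub).trans ?_
        nlinarith
      · have hmem : N ∈ Finset.Icc 1 N := Finset.mem_Icc.mpr ⟨hN, le_refl N⟩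
        have hval : (1 / 4 : ℝ) * (N : ℝ) ^ (1 / p)
            ≤ (N : ℝ) ^ (1 / p) * (if N ∈ Finset.Icc 1 N then (1 : ℝ) else 0) := by
          rw [if_pos hmem, mul_one]; nlinarith
        exact hval.trans (le_ciSup ⟨(N : ℝ) ^ (1 / p), Set.forall_mem_range.mpr hub⟩ N)
    · rw [if_neg h]
      set t := r.toReal with hto
      have ht : 1 ≤ t := by
        rw [hto, ← ENNReal.toReal_one]
        exact ENNReal.toReal_mono h hr
      have ht0 : (0 : ℝ) < t := by linarith
      have h1t : 1 / t ≤ 1 := by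
        rw [div_le_one ht0]; linarith
      have h1t0 : (0 : ℝ) ≤ 1 / t := by positivity
      rw [stmt19_tsum_eq hp0 ht N]
      set S := ∑ j ∈ Finset.Icc 1 N, (j : ℝ) ^ (t / p - 1) with hS
      have hS0 : 0 ≤ S := Finset.sum_nonneg fun j _ => Real.rpow_nonneg (Nat.cast_nonneg j) _
      have hexp : t / p * (1 / t) = 1 / p := by field_simp
      constructor
      · calc S ^ (1 / t) ≤ (p * (N : ℝ) ^ (t / p)) ^ (1 / t) :=
              Real.rpow_le_rpow hS0 (stmt19_S_upper hp ht hN) h1t0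
          _ = p ^ (1 / t) * (N : ℝ) ^ (1 / p) := by
              rw [Real.mul_rpow hp0.le (Real.rpow_nonneg hNpos.le _),
                ← Real.rpow_mul hNpos.le, hexp]
          _ ≤ p * (N : ℝ) ^ (1 / p) := by
              refine mul_le_mul_of_nonneg_right ?_ hNrp
              calc p ^ (1 / t) ≤ p ^ (1 : ℝ) :=
                    Real.rpow_le_rpow_of_exponent_le (by linarith) h1t
                _ = p := Real.rpow_one p
      · have hN2 : (0 : ℝ) ≤ (N : ℝ) / 2 := by positivity
        calc (1 / 4 : ℝ) * (N : ℝ) ^ (1 / p)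
            = (1 / 2 : ℝ) * ((N : ℝ) ^ (1 / p) / 2) := by ring
          _ ≤ ((1 / 2 : ℝ) ^ (1 / t)) * (((N : ℝ) / 2) ^ (1 / p)) := by
              refine mul_le_mul ?_ ?_ (by positivity) (by positivity)
              · calc (1 / 2 : ℝ) = (1 / 2 : ℝ) ^ (1 : ℝ) := (Real.rpow_one _).symm
                  _ ≤ (1 / 2 : ℝ) ^ (1 / t) :=
                    Real.rpow_le_rpow_of_exponent_ge (by norm_num) (by norm_num) h1t
              · rw [Real.div_rpow hNpos.le (by norm_num : (0:ℝ) ≤ 2)]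
                gcongr
                calc (2 : ℝ) ^ (1 / p) ≤ (2 : ℝ) ^ (1 : ℝ) :=
                      Real.rpow_le_rpow_of_exponent_le one_le_two
                        (by rw [div_le_one hp0]; linarith)
                  _ = 2 := Real.rpow_one 2
          _ = ((1 / 2) * ((N : ℝ) / 2) ^ (t / p)) ^ (1 / t) := by
              rw [Real.mul_rpow (by norm_num) (Real.rpow_nonneg hN2 _),
                ← Real.rpow_mul hN2, hexp]
          _ ≤ S ^ (1 / t) :=
              Real.rpow_le_rpow (by positivity) (stmt19_S_lower hp ht hN) h1t0
  exact ⟨le_trans hF1le.2 (le_max_left _ _), max_le hF1le.1 hF2le⟩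
end
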